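/- Let d ≥ 1 and let Λ = {Λ_t}_{t ≥ 0} be a dynamical map on M_d(ℂ). If for all states ρ₁, ρ₂ on ℂ^{d+1} ⊗ ℂ^d and all times 0 ≤ s ≤ t one has ‖(I_{d+1} ⊗ Λ_t)(ρ₁ − ρ₂)‖₁ ≤ ‖(I_{d+1} ⊗ Λ_s)(ρ₁ − ρ₂)‖₁, then Λ is divisible: for all 0 ≤ s ≤ t there exists a linear map V_{t,s} : M_d(ℂ) → M_d(ℂ) such that Λ_t = V_{t,s} ∘ Λ_s. -/

import Mathlib

open Matrix Kronecker
open scoped ComplexOrder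

/-- The trace norm of a complex matrix: the trace of the positive semidefinite
square root of `Aᴴ * A`. -/
noncomputable def traceNorm {n : Type*} [Fintype n] [DecidableEq n]
    (A : Matrix n n ℂ) : ℝ :=
  (((Matrix.posSemidef_conjTranspose_mul_self A).1.eigenvectorUnitary : Matrix n n ℂ) *
      diagonal ((fun x : ℝ => (x : ℂ)) ∘ Real.sqrt ∘ (Matrix.posSemidef_conjTranspose_mul_self A).1.eigenvalues) *
      (star (Matrix.posSemidef_conjTranspose_mul_self A).1.eigenvectorUnitary : Matrix n n ℂ)).trace.re

/-- A state: a positive semidefinite matrix of trace one. -/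
def IsState {n : Type*} [Fintype n] [DecidableEq n] (ρ : Matrix n n ℂ) : Prop :=
  ρ.PosSemidef ∧ ρ.trace = 1

/-- A trace-preserving linear map on matrices. -/
def TracePreserving {d : ℕ} (Φ : Matrix (Fin d) (Fin d) ℂ →ₗ[ℂ] Matrix (Fin d) (Fin d) ℂ) : Prop :=
  ∀ A, (Φ A).trace = A.trace

/-- A Hermiticity-preserving linear map on matrices. -/
def HermPreserving {d : ℕ} (Φ : Matrix (Fin d) (Fin d) ℂ →ₗ[ℂ] Matrix (Fin d) (Fin d) ℂ) : Prop :=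
  ∀ A, Φ Aᴴ = (Φ A)ᴴ

/-- The ampliation `I_n ⊗ Φ` of a linear map `Φ` on `d × d` matrices, acting blockwise
on `n × n` block matrices with `d × d` blocks. -/
def ampliation {n d : ℕ} (Φ : Matrix (Fin d) (Fin d) ℂ →ₗ[ℂ] Matrix (Fin d) (Fin d) ℂ)
    (A : Matrix (Fin n × Fin d) (Fin n × Fin d) ℂ) :
    Matrix (Fin n × Fin d) (Fin n × Fin d) ℂ :=
  Matrix.of fun p q => Φ (Matrix.of fun i j => A (p.1, i) (q.1, j)) p.2 q.2

/-- A positive map: maps positive semidefinite matrices to positive semidefinite matrices. -/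
def PositiveMap {d : ℕ} (Φ : Matrix (Fin d) (Fin d) ℂ →ₗ[ℂ] Matrix (Fin d) (Fin d) ℂ) : Prop :=
  ∀ A, A.PosSemidef → (Φ A).PosSemidef

/-- A completely positive map: every ampliation `I_n ⊗ Φ` is a positive map. -/
def CompletelyPositive {d : ℕ}
    (Φ : Matrix (Fin d) (Fin d) ℂ →ₗ[ℂ] Matrix (Fin d) (Fin d) ℂ) : Prop :=
  ∀ n : ℕ, 1 ≤ n → ∀ A : Matrix (Fin n × Fin d) (Fin n × Fin d) ℂ,
    A.PosSemidef → (ampliation Φ A).PosSemidef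

/-- A separable state on `ℂ^m ⊗ ℂ^d`: a finite convex combination of product states. -/
def SeparableState {m d : ℕ} (ρ : Matrix (Fin m × Fin d) (Fin m × Fin d) ℂ) : Prop :=
  ∃ (k : ℕ) (w : Fin k → ℝ) (σ : Fin k → Matrix (Fin m) (Fin m) ℂ)
    (τ : Fin k → Matrix (Fin d) (Fin d) ℂ),
    (∀ i, 0 ≤ w i) ∧ (∑ i, w i) = 1 ∧ (∀ i, IsState (σ i)) ∧ (∀ i, IsState (τ i)) ∧
    ρ = ∑ i, (w i : ℂ) • (σ i ⊗ₖ τ i)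
section aux
variable {n : Type*} [Fintype n] [DecidableEq n]

open scoped MatrixOrder in
lemma psd_exists_eq_conjTranspose_mul_self {A : Matrix n n ℂ} (hA : A.PosSemidef) :
    ∃ B : Matrix n n ℂ, A = Bᴴ * B := by
  obtain ⟨X, hX, -, rfl⟩ := CFC.exists_sqrt_of_isSelfAdjoint_of_quasispectrumRestricts
    hA.isHermitian (QuasispectrumRestricts.nnreal_of_nonneg hA.nonneg)
  exact ⟨X, by rw [← Matrix.star_eq_conjTranspose, hX.star_eq]⟩

lemma psd_trace_re_nonneg {S : Matrix n n ℂ} (hS : S.PosSemidef) : 0 ≤ S.trace.re := by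
  obtain ⟨B, rfl⟩ := psd_exists_eq_conjTranspose_mul_self hS
  rw [Matrix.trace]
  simp only [Complex.re_sum]
  refine Finset.sum_nonneg fun j _ => ?_
  have h0 : (0 : ℂ) ≤ (Bᴴ * B).diag j := by
    simpa [Matrix.mul_apply, dotProduct] using
      dotProduct_star_self_nonneg (fun i => B i j)
  exact (Complex.le_def.mp h0).1

lemma psd_eq_zero_of_trace {S : Matrix n n ℂ} (hS : S.PosSemidef) (h : S.trace.re ≤ 0) :
    S = 0 := by
  obtain ⟨B, rfl⟩ := psd_exists_eq_conjTranspose_mul_self hS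
  rw [Matrix.conjTranspose_mul_self_eq_zero]
  have hdiag : ∀ j, (0:ℂ) ≤ (Bᴴ * B).diag j := by
    intro j
    simpa [Matrix.mul_apply, dotProduct] using
      dotProduct_star_self_nonneg (fun i => B i j)
  have hre : ∀ j ∈ Finset.univ, (0:ℝ) ≤ ((Bᴴ * B).diag j).re :=
    fun j _ => (Complex.le_def.mp (hdiag j)).1
  have hsum : ∑ j, ((Bᴴ * B).diag j).re = 0 := by
    refine le_antisymm ?_ (Finset.sum_nonneg hre)
    simpa [Matrix.trace, Complex.re_sum] using h
  have hz : ∀ j ∈ Finset.univ, ((Bᴴ * B).diag j).re = 0 :=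
    (Finset.sum_eq_zero_iff_of_nonneg hre).mp hsum
  ext i j
  have hjj : (Bᴴ * B) j j = 0 := by
    have him := (Complex.le_def.mp (hdiag j)).2
    have := hz j (Finset.mem_univ j)
    apply Complex.ext <;> simp_all [Matrix.diag]
  have : (star (fun i => B i j)) ⬝ᵥ (fun i => B i j) = 0 := by
    simpa [Matrix.mul_apply, dotProduct] using hjj
  have := dotProduct_star_self_eq_zero.mp this
  exact congrFun this i

lemma traceNorm_eq_sum (A : Matrix n n ℂ) : traceNorm A =
    ∑ i, Real.sqrt ((Matrix.posSemidef_conjTranspose_mul_self A).1.eigenvalues i) := by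
  unfold traceNorm
  rw [Matrix.trace_mul_comm, ← Matrix.mul_assoc,
    Matrix.UnitaryGroup.star_mul_self, Matrix.one_mul, Matrix.trace_diagonal, Complex.re_sum]
  simp

lemma traceNorm_nonneg (A : Matrix n n ℂ) : 0 ≤ traceNorm A := by
  rw [traceNorm_eq_sum]
  exact Finset.sum_nonneg fun i _ => Real.sqrt_nonneg _

lemma eq_zero_of_traceNorm_le_zero {A : Matrix n n ℂ} (h : traceNorm A ≤ 0) : A = 0 := by
  rw [traceNorm_eq_sum] at h
  have hz := (Finset.sum_eq_zero_iff_of_nonneg (fun i _ => Real.sqrt_nonneg _)).mp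
    (le_antisymm h (Finset.sum_nonneg fun i _ => Real.sqrt_nonneg _))
  have hev : (Matrix.posSemidef_conjTranspose_mul_self A).1.eigenvalues = 0 :=
    funext fun i => le_antisymm (Real.sqrt_eq_zero'.mp (hz i (Finset.mem_univ i)))
      ((Matrix.posSemidef_conjTranspose_mul_self A).eigenvalues_nonneg i)
  exact Matrix.conjTranspose_mul_self_eq_zero.mp
    ((Matrix.posSemidef_conjTranspose_mul_self A).1.eigenvalues_eq_zero_iff.mp hev)

lemma traceNorm_zero : traceNorm (0 : Matrix n n ℂ) = 0 := by
  rw [traceNorm_eq_sum]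
  have hev := (Matrix.posSemidef_conjTranspose_mul_self (0 : Matrix n n ℂ)).1.eigenvalues_eq_zero_iff.mpr
    (by simp)
  rw [hev]
  simp

end aux

section aux2
variable {m n : Type*} [Fintype m] [DecidableEq m] [Fintype n] [DecidableEq n]

lemma posSemidef_real_smul {M : Matrix n n ℂ} (hM : M.PosSemidef) {c : ℝ} (hc : 0 ≤ c) :
    ((c : ℂ) • M).PosSemidef := by
  obtain ⟨B, rfl⟩ := psd_exists_eq_conjTranspose_mul_self hM
  have key : (c : ℂ) • (Bᴴ * B) = ((Real.sqrt c : ℂ) • B)ᴴ * ((Real.sqrt c : ℂ) • B) := by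
    rw [Matrix.conjTranspose_smul, Matrix.smul_mul, Matrix.mul_smul, smul_smul]
    congr 1
    rw [Complex.star_def, Complex.conj_ofReal, ← Complex.ofReal_mul, Real.mul_self_sqrt hc]
  rw [key]
  exact Matrix.posSemidef_conjTranspose_mul_self _

lemma kronecker_conjTranspose (A : Matrix m m ℂ) (B : Matrix n n ℂ) :
    (A ⊗ₖ B)ᴴ = Aᴴ ⊗ₖ Bᴴ := by
  ext ⟨i1, i2⟩ ⟨j1, j2⟩
  simp [Matrix.conjTranspose_apply, Matrix.kroneckerMap_apply, star_mul']

lemma posSemidef_kronecker {A : Matrix m m ℂ} {B : Matrix n n ℂ}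
    (hA : A.PosSemidef) (hB : B.PosSemidef) : (A ⊗ₖ B).PosSemidef := by
  obtain ⟨C, rfl⟩ := psd_exists_eq_conjTranspose_mul_self hA
  obtain ⟨D, rfl⟩ := psd_exists_eq_conjTranspose_mul_self hB
  have key : (Cᴴ * C) ⊗ₖ (Dᴴ * D) = (C ⊗ₖ D)ᴴ * (C ⊗ₖ D) := by
    rw [kronecker_conjTranspose, Matrix.mul_kronecker_mul]
  rw [key]
  exact Matrix.posSemidef_conjTranspose_mul_self _

lemma herm_add_smul_one_posSemidef {H : Matrix n n ℂ} (hH : H.IsHermitian) :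
    ∃ r : ℝ, 0 < r ∧ (H + (r : ℂ) • 1).PosSemidef := by
  classical
  set lam := hH.eigenvalues with hlam
  refine ⟨(∑ i, |lam i|) + 1, by positivity, ?_⟩
  set r : ℝ := (∑ i, |lam i|) + 1 with hr
  set U : Matrix n n ℂ := (Matrix.IsHermitian.eigenvectorUnitary hH : Matrix n n ℂ) with hU
  have hUu : U * star U = 1 :=
    (Matrix.mem_unitaryGroup_iff).mp (Matrix.IsHermitian.eigenvectorUnitary hH).2
  have key : H + (r : ℂ) • 1 =
      U * Matrix.diagonal (fun i => ((lam i + r : ℝ) : ℂ)) * star U := by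
    conv_lhs => rw [hH.spectral_theorem]
    have hD : Matrix.diagonal ((fun x : ℝ => (x : ℂ)) ∘ lam) + (r : ℂ) • 1
        = Matrix.diagonal (fun i => ((lam i + r : ℝ) : ℂ)) := by
      ext i j
      rcases eq_or_ne i j with rfl | hij
      · simp [Matrix.diagonal_apply, Matrix.one_apply]
      · simp [Matrix.diagonal_apply, Matrix.one_apply, hij]
    rw [← hD, Matrix.mul_add, Matrix.add_mul]
    congr 1
    rw [Matrix.mul_smul, Matrix.smul_mul, Matrix.mul_one, hUu]
  rw [key, Matrix.star_eq_conjTranspose U]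
  refine Matrix.PosSemidef.mul_mul_conjTranspose_same ?_ U
  refine Matrix.PosSemidef.diagonal fun i => ?_
  simp only [Pi.zero_apply]
  rw [Complex.zero_le_real]
  have h1 : |lam i| ≤ ∑ j, |lam j| :=
    Finset.single_le_sum (fun j _ => abs_nonneg (lam j)) (Finset.mem_univ i)
  have := neg_abs_le (lam i)
  linarith

end aux2

section aux3
variable {d : ℕ}

lemma ampliation_kronecker {n : ℕ} (Φ : Matrix (Fin d) (Fin d) ℂ →ₗ[ℂ] Matrix (Fin d) (Fin d) ℂ)
    (E : Matrix (Fin n) (Fin n) ℂ) (B : Matrix (Fin d) (Fin d) ℂ) :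
    ampliation Φ (E ⊗ₖ B) = E ⊗ₖ (Φ B) := by
  ext ⟨p1, p2⟩ ⟨q1, q2⟩
  show Φ (Matrix.of fun i j => (E ⊗ₖ B) (p1, i) (q1, j)) p2 q2 = E p1 q1 * Φ B p2 q2
  have hblock : (Matrix.of fun i j => (E ⊗ₖ B) (p1, i) (q1, j)) = E p1 q1 • B := by
    ext i j
    simp [Matrix.kroneckerMap_apply]
  rw [hblock, LinearMap.map_smul]
  simp

lemma positive_of_CP (Φ : Matrix (Fin d) (Fin d) ℂ →ₗ[ℂ] Matrix (Fin d) (Fin d) ℂ)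
    (hΦ : CompletelyPositive Φ) : ∀ A, A.PosSemidef → (Φ A).PosSemidef := by
  intro A hA
  have h1 : ((1 : Matrix (Fin 1) (Fin 1) ℂ) ⊗ₖ A).PosSemidef :=
    posSemidef_kronecker Matrix.PosSemidef.one hA
  have h2 := hΦ 1 le_rfl _ h1
  rw [ampliation_kronecker] at h2
  have h3 := h2.submatrix (fun i : Fin d => ((0 : Fin 1), i))
  have h4 : (((1 : Matrix (Fin 1) (Fin 1) ℂ) ⊗ₖ (Φ A)).submatrix
      (fun i : Fin d => ((0 : Fin 1), i)) (fun i : Fin d => ((0 : Fin 1), i))) = Φ A := by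
    ext i j
    simp [Matrix.kroneckerMap_apply, Matrix.one_apply]
  rwa [h4] at h3

lemma herm_of_positive (Φ : Matrix (Fin d) (Fin d) ℂ →ₗ[ℂ] Matrix (Fin d) (Fin d) ℂ)
    (hp : ∀ A, A.PosSemidef → (Φ A).PosSemidef)
    {H : Matrix (Fin d) (Fin d) ℂ} (hH : H.IsHermitian) : (Φ H).IsHermitian := by
  obtain ⟨r, hr, hP⟩ := herm_add_smul_one_posSemidef hH
  have hQ : (((r : ℝ) : ℂ) • (1 : Matrix (Fin d) (Fin d) ℂ)).PosSemidef :=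
    posSemidef_real_smul Matrix.PosSemidef.one hr.le
  have hsplit : Φ H = Φ (H + (r : ℂ) • 1) - Φ ((r : ℂ) • 1) := by
    rw [← map_sub]
    congr 1
    rw [add_sub_cancel_right]
  rw [hsplit]
  exact ((hp _ hP).isHermitian).sub ((hp _ hQ).isHermitian)

lemma cartesian_decomposition (A : Matrix (Fin d) (Fin d) ℂ) :
    ∃ H K : Matrix (Fin d) (Fin d) ℂ, H.IsHermitian ∧ K.IsHermitian ∧
      A = H + Complex.I • K ∧ H = (2⁻¹ : ℂ) • (A + Aᴴ) ∧
      K = ((-(2⁻¹) * Complex.I : ℂ)) • (A - Aᴴ) := by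
  have hIsq : Complex.I * (-(2⁻¹) * Complex.I) = (2⁻¹ : ℂ) := by
    ring_nf
    rw [Complex.I_sq]
    ring
  refine ⟨(2⁻¹ : ℂ) • (A + Aᴴ), ((-(2⁻¹) * Complex.I : ℂ)) • (A - Aᴴ), ?_, ?_, ?_, rfl, rfl⟩
  · rw [Matrix.IsHermitian, Matrix.conjTranspose_smul, Matrix.conjTranspose_add,
      Matrix.conjTranspose_conjTranspose]
    rw [show (star (2⁻¹ : ℂ)) = (2⁻¹ : ℂ) by simp]
    rw [add_comm]
  · rw [Matrix.IsHermitian, Matrix.conjTranspose_smul, Matrix.conjTranspose_sub,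
      Matrix.conjTranspose_conjTranspose]
    rw [show (star ((-(2⁻¹) * Complex.I : ℂ))) = ((2⁻¹) * Complex.I : ℂ) by
      simp [star_mul', Complex.star_def, Complex.conj_I]]
    rw [← neg_sub A Aᴴ, smul_neg, ← neg_smul, neg_mul]
  · rw [smul_smul, hIsq, ← smul_add]
    rw [show A + Aᴴ + (A - Aᴴ) = (2 : ℂ) • A by rw [two_smul]; abel]
    rw [smul_smul]
    norm_num

lemma hermPreserving_of_positive (Φ : Matrix (Fin d) (Fin d) ℂ →ₗ[ℂ] Matrix (Fin d) (Fin d) ℂ)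
    (hp : ∀ A, A.PosSemidef → (Φ A).PosSemidef) (A : Matrix (Fin d) (Fin d) ℂ) :
    Φ Aᴴ = (Φ A)ᴴ := by
  obtain ⟨H, K, hHh, hKh, hA1, -, -⟩ := cartesian_decomposition A
  have hA2 : Aᴴ = H - Complex.I • K := by
    conv_lhs => rw [hA1]
    rw [Matrix.conjTranspose_add, Matrix.conjTranspose_smul, hHh.eq, hKh.eq,
      Complex.star_def, Complex.conj_I, neg_smul, sub_eq_add_neg]
  rw [hA2, map_sub, LinearMap.map_smul]
  conv_rhs => rw [hA1]
  rw [map_add, LinearMap.map_smul, Matrix.conjTranspose_add, Matrix.conjTranspose_smul,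
    (herm_of_positive Φ hp hHh).eq, (herm_of_positive Φ hp hKh).eq,
    Complex.star_def, Complex.conj_I, neg_smul, sub_eq_add_neg]

lemma exists_factor (f g : Matrix (Fin d) (Fin d) ℂ →ₗ[ℂ] Matrix (Fin d) (Fin d) ℂ)
    (hker : LinearMap.ker f ≤ LinearMap.ker g) : ∃ V, g = V ∘ₗ f := by
  obtain ⟨V, hV⟩ := LinearMap.exists_extend
    (((LinearMap.ker f).liftQ g hker) ∘ₗ (f.quotKerEquivRange.symm.toLinearMap))
  refine ⟨V, LinearMap.ext fun A => ?_⟩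
  have h2 := DFunLike.congr_fun hV (⟨f A, LinearMap.mem_range_self f A⟩ : LinearMap.range f)
  simp only [LinearMap.comp_apply, Submodule.subtype_apply, LinearEquiv.coe_coe] at h2 ⊢
  rw [h2, f.quotKerEquivRange_symm_apply_image A (LinearMap.mem_range_self f A),
    Submodule.mkQ_apply, Submodule.liftQ_apply]

end aux3

/-- If the distinguishability of states of system and a `(d+1)`-dimensional ancilla never
increases, then the dynamical map is divisible into a sequence of linear maps. -/
theorem nonincreasing_distinguishability_implies_divisible (d : ℕ) (hd : 1 ≤ d)
    (Λ : ℝ → (Matrix (Fin d) (Fin d) ℂ →ₗ[ℂ] Matrix (Fin d) (Fin d) ℂ))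
    (hTP : ∀ t : ℝ, 0 ≤ t → TracePreserving (Λ t))
    (hCP : ∀ t : ℝ, 0 ≤ t → CompletelyPositive (Λ t))
    (hΛ0 : Λ 0 = LinearMap.id)
    (h : ∀ ρ₁ ρ₂ : Matrix (Fin (d+1) × Fin d) (Fin (d+1) × Fin d) ℂ,
      IsState ρ₁ → IsState ρ₂ → ∀ s t : ℝ, 0 ≤ s → s ≤ t →
        traceNorm (ampliation (Λ t) (ρ₁ - ρ₂)) ≤ traceNorm (ampliation (Λ s) (ρ₁ - ρ₂))) :
    ∀ s t : ℝ, 0 ≤ s → s ≤ t →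
      ∃ V : Matrix (Fin d) (Fin d) ℂ →ₗ[ℂ] Matrix (Fin d) (Fin d) ℂ, Λ t = V ∘ₗ Λ s := by
  intro s t hs hst
  have ht : 0 ≤ t := hs.trans hst
  have hpos_s := positive_of_CP (Λ s) (hCP s hs)
  -- the ancilla state E = |0⟩⟨0| on ℂ^(d+1)
  have hd0 : (0 : ℝ) < (d : ℝ) := by exact_mod_cast Nat.lt_of_lt_of_le Nat.zero_lt_one hd
  let E : Matrix (Fin (d+1)) (Fin (d+1)) ℂ := Matrix.single 0 0 1
  have hEherm : Eᴴ = E := by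
    ext i j
    simp [E, Matrix.single, Matrix.conjTranspose_apply, apply_ite, and_comm]
  have hEmul : E * E = E := by
    rw [show E * E = Matrix.single (0 : Fin (d+1)) 0 (1 * 1 : ℂ) from
      Matrix.single_mul_single_same (c := (1 : ℂ)) (0 : Fin (d+1)) (0 : Fin (d+1)) (0 : Fin (d+1)) 1]
    norm_num [E]
  have hEpsd : E.PosSemidef := by
    have : Eᴴ * E = E := by rw [hEherm, hEmul]
    rw [← this]
    exact Matrix.posSemidef_conjTranspose_mul_self E
  have hEtr : E.trace = 1 := by
    simp [E, Matrix.trace, Matrix.diag, Matrix.single]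
  -- key step for Hermitian kernel elements
  have hker1 : ∀ H : Matrix (Fin d) (Fin d) ℂ, H.IsHermitian → Λ s H = 0 → Λ t H = 0 := by
    intro H hH hH0
    by_cases hHz : H = 0
    · rw [hHz, map_zero]
    have htr : H.trace = 0 := by rw [← hTP s hs H, hH0, Matrix.trace_zero]
    obtain ⟨r, hr, hP⟩ := herm_add_smul_one_posSemidef hH
    have hm : (0 : ℝ) < r * d := mul_pos hr hd0
    set c : ℝ := (r * d)⁻¹ with hc
    have hc0 : 0 ≤ c := (inv_pos.mpr hm).le
    set τ₁ : Matrix (Fin d) (Fin d) ℂ := (c : ℂ) • (H + (r : ℂ) • 1) with hτ₁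
    set τ₂ : Matrix (Fin d) (Fin d) ℂ := (c : ℂ) • ((r : ℂ) • 1) with hτ₂
    have hτ₁psd : τ₁.PosSemidef := posSemidef_real_smul hP hc0
    have hτ₂psd : τ₂.PosSemidef :=
      posSemidef_real_smul (posSemidef_real_smul Matrix.PosSemidef.one hr.le) hc0
    have htrP : (H + (r : ℂ) • 1).trace = ((r * d : ℝ) : ℂ) := by
      rw [Matrix.trace_add, Matrix.trace_smul, Matrix.trace_one, htr]
      push_cast
      simp [smul_eq_mul]
    have htr1 : τ₁.trace = 1 := by
      rw [hτ₁, Matrix.trace_smul, htrP, smul_eq_mul, ← Complex.ofReal_mul,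
        inv_mul_cancel₀ hm.ne']
      norm_num
    have htr2 : τ₂.trace = 1 := by
      rw [hτ₂, Matrix.trace_smul, Matrix.trace_smul, Matrix.trace_one, smul_eq_mul, smul_eq_mul]
      rw [show ((Fintype.card (Fin d) : ℂ)) = ((d : ℝ) : ℂ) by push_cast; simp]
      rw [hc]
      push_cast
      field_simp
    have hst1 : IsState (E ⊗ₖ τ₁) :=
      ⟨posSemidef_kronecker hEpsd hτ₁psd, by rw [Matrix.trace_kronecker, hEtr, htr1, one_mul]⟩
    have hst2 : IsState (E ⊗ₖ τ₂) :=
      ⟨posSemidef_kronecker hEpsd hτ₂psd, by rw [Matrix.trace_kronecker, hEtr, htr2, one_mul]⟩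
    have hineq := h (E ⊗ₖ τ₁) (E ⊗ₖ τ₂) hst1 hst2 s t hs hst
    have hdiff : E ⊗ₖ τ₁ - E ⊗ₖ τ₂ = E ⊗ₖ ((c : ℂ) • H) := by
      have hτ : τ₁ - τ₂ = (c : ℂ) • H := by
        rw [hτ₁, hτ₂, ← smul_sub, add_sub_cancel_right]
      rw [← hτ]
      ext ⟨p1, p2⟩ ⟨q1, q2⟩
      simp [Matrix.kroneckerMap_apply]
      ring
    have hzk : E ⊗ₖ (0 : Matrix (Fin d) (Fin d) ℂ) = 0 := by
      ext ⟨p1, p2⟩ ⟨q1, q2⟩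
      simp [Matrix.kroneckerMap_apply]
    rw [hdiff, ampliation_kronecker, ampliation_kronecker, LinearMap.map_smul,
      LinearMap.map_smul, hH0, smul_zero, hzk, traceNorm_zero] at hineq
    have h0 : E ⊗ₖ ((c : ℂ) • Λ t H) = 0 := eq_zero_of_traceNorm_le_zero hineq
    ext i j
    have hentry := congrFun (congrFun h0 ((0 : Fin (d+1)), i)) ((0 : Fin (d+1)), j)
    simp [Matrix.kroneckerMap_apply, E, Matrix.single] at hentry
    rcases hentry with hc' | hz
    · exact absurd hc' (by positivity)
    · simpa using hz
  -- kernel inclusion for general matrices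
  have hker : LinearMap.ker (Λ s) ≤ LinearMap.ker (Λ t) := by
    intro A hA
    rw [LinearMap.mem_ker] at hA ⊢
    have hAH : Λ s Aᴴ = 0 := by
      rw [hermPreserving_of_positive _ hpos_s, hA, Matrix.conjTranspose_zero]
    obtain ⟨H, K, hHh, hKh, hA1, hHe, hKe⟩ := cartesian_decomposition A
    have hsH : Λ s H = 0 := by
      rw [hHe, LinearMap.map_smul, map_add, hA, hAH]
      simp
    have hsK : Λ s K = 0 := by
      rw [hKe, LinearMap.map_smul, map_sub, hA, hAH]
      simp
    rw [hA1, map_add, LinearMap.map_smul, hker1 H hHh hsH, hker1 K hKh hsK]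
    simp
  exact exists_factor (Λ s) (Λ t) hker
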